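/- Let K be a field, d ≥ 2, and let e ⊆ [n] be a nonempty finite set. Then the polynomial f^{(d)}_e = ∑_{j=1}^d ∏_{i∈e} y_{ij} is irreducible in the polynomial ring K[y_{ij} : i ∈ [n], j ∈ [d]]. -/

import Mathlib

open MvPolynomial

-- linear polynomial with "coprime" coefficients is irreducible
lemma linear_irred {R : Type*} [CommRing R] [IsDomain R] {a b : R} (ha : a ≠ 0)
    (hcop : ∀ c : R, c ∣ a → c ∣ b → IsUnit c) :
    Irreducible (Polynomial.C a * Polynomial.X + Polynomial.C b) := by
  have hdeg : (Polynomial.C a * Polynomial.X + Polynomial.C b).natDegree = 1 :=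
    Polynomial.natDegree_linear ha
  constructor
  · intro h
    have := Polynomial.natDegree_eq_zero_of_isUnit h
    omega
  · intro p q hpq
    have hne : (Polynomial.C a * Polynomial.X + Polynomial.C b) ≠ 0 := by
      intro h; rw [h] at hdeg; simp at hdeg
    have hp0 : p ≠ 0 := by rintro rfl; simp at hpq; exact hne hpq
    have hq0 : q ≠ 0 := by rintro rfl; simp at hpq; exact hne hpq
    have hsum : p.natDegree + q.natDegree = 1 := by
      rw [← Polynomial.natDegree_mul hp0 hq0, ← hpq, hdeg]
    have hcoeff1 : (Polynomial.C a * Polynomial.X + Polynomial.C b).coeff 1 = a := by simp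
    have hcoeff0 : (Polynomial.C a * Polynomial.X + Polynomial.C b).coeff 0 = b := by simp
    rcases Nat.eq_zero_or_pos p.natDegree with hp | hp
    · left
      obtain ⟨c, rfl⟩ : ∃ c, p = Polynomial.C c :=
        ⟨p.coeff 0, Polynomial.eq_C_of_natDegree_eq_zero hp⟩
      have hca : c ∣ a := by
        refine ⟨q.coeff 1, ?_⟩
        rw [← hcoeff1, hpq, Polynomial.coeff_C_mul]
      have hcb : c ∣ b := by
        refine ⟨q.coeff 0, ?_⟩
        rw [← hcoeff0, hpq, Polynomial.coeff_C_mul]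
      exact (Polynomial.isUnit_C).2 (hcop c hca hcb)
    · right
      have hq : q.natDegree = 0 := by omega
      obtain ⟨c, rfl⟩ : ∃ c, q = Polynomial.C c :=
        ⟨q.coeff 0, Polynomial.eq_C_of_natDegree_eq_zero hq⟩
      have hca : c ∣ a := by
        refine ⟨p.coeff 1, ?_⟩
        rw [← hcoeff1, hpq, mul_comm, Polynomial.coeff_C_mul]
      have hcb : c ∣ b := by
        refine ⟨p.coeff 0, ?_⟩
        rw [← hcoeff0, hpq, mul_comm, Polynomial.coeff_C_mul]
      exact (Polynomial.isUnit_C).2 (hcop c hca hcb)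

lemma mv_prime_X {σ : Type*} {R : Type*} [CommRing R] [IsDomain R] (s : σ) :
    Prime (X s : MvPolynomial σ R) := by
  classical
  let Φ : MvPolynomial σ R ≃ₐ[R] Polynomial (MvPolynomial {x : σ // x ≠ s} R) :=
    (renameEquiv R (Equiv.optionSubtypeNe s).symm).trans (optionEquivLeft R {x : σ // x ≠ s})
  rw [← MulEquiv.prime_iff Φ.toMulEquiv]
  have hx : Φ (X s) = Polynomial.X := by
    simp [Φ, Equiv.optionSubtypeNe_symm_self, optionEquivLeft_X_none]
  rw [show Φ.toMulEquiv (X s) = Φ (X s) from rfl, hx]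
  exact Polynomial.prime_X

/-- For `d ≥ 2` and a nonempty set `e ⊆ [n]`, the polynomial
`f^{(d)}_e = ∑_{j=1}^d ∏_{i ∈ e} y_{ij}` is irreducible in `K[y_{ij} : i ∈ [n], j ∈ [d]]`. -/
theorem lss_generator_irreducible
    (K : Type*) [Field K] (n d : ℕ) (hd : 2 ≤ d)
    (e : Finset (Fin n)) (he : e.Nonempty) :
    Irreducible (∑ j : Fin d, ∏ i ∈ e, (X (i, j) : MvPolynomial (Fin n × Fin d) K)) := by
  classical
  obtain ⟨i₀, hi₀⟩ := he
  set j₀ : Fin d := ⟨0, by omega⟩ with hj₀def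
  set j₁ : Fin d := ⟨1, by omega⟩ with hj₁def
  have hj01 : j₁ ≠ j₀ := by simp [hj₀def, hj₁def, Fin.ext_iff]
  set v : Fin n × Fin d := (i₀, j₀) with hv
  let σ' := {x : Fin n × Fin d // x ≠ v}
  let Φ : MvPolynomial (Fin n × Fin d) K ≃ₐ[K] Polynomial (MvPolynomial σ' K) :=
    (renameEquiv K (Equiv.optionSubtypeNe v).symm).trans (optionEquivLeft K σ')
  rw [← MulEquiv.irreducible_iff Φ.toMulEquiv]
  have hΦX : ∀ (w : Fin n × Fin d) (h : w ≠ v), Φ (X w) = Polynomial.C (X (⟨w, h⟩ : σ')) := by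
    intro w h
    simp [Φ, Equiv.optionSubtypeNe_symm_of_ne h, optionEquivLeft_X_some]
  have hΦv : Φ (X v) = Polynomial.X := by
    simp [Φ, Equiv.optionSubtypeNe_symm_self, optionEquivLeft_X_none]
  let G : MvPolynomial σ' K :=
    ∏ x ∈ (e.erase i₀).attach,
      X (⟨(x.1, j₀), fun h => Finset.ne_of_mem_erase x.2 (congrArg Prod.fst h)⟩ : σ')
  let H : MvPolynomial σ' K :=
    ∑ x ∈ (Finset.univ.erase j₀).attach, ∏ i ∈ e,
      X (⟨(i, x.1), fun h => Finset.ne_of_mem_erase x.2 (congrArg Prod.snd h)⟩ : σ')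
  have hf : (∑ j : Fin d, ∏ i ∈ e, (X (i, j) : MvPolynomial (Fin n × Fin d) K))
      = X v * (∏ i ∈ e.erase i₀, X (i, j₀))
        + ∑ j ∈ Finset.univ.erase j₀, ∏ i ∈ e, X (i, j) := by
    rw [← Finset.add_sum_erase Finset.univ _ (Finset.mem_univ j₀)]
    congr 1
    exact (Finset.mul_prod_erase e _ hi₀).symm
  have hG : Φ (∏ i ∈ e.erase i₀, X (i, j₀)) = Polynomial.C G := by
    rw [← Finset.prod_attach (e.erase i₀)
      (fun i => (X (i, j₀) : MvPolynomial (Fin n × Fin d) K)), map_prod, map_prod]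
    exact Finset.prod_congr rfl fun x _ => hΦX _ _
  have hH : Φ (∑ j ∈ Finset.univ.erase j₀, ∏ i ∈ e, X (i, j)) = Polynomial.C H := by
    rw [← Finset.sum_attach (Finset.univ.erase j₀)
      (fun j => ∏ i ∈ e, (X (i, j) : MvPolynomial (Fin n × Fin d) K)), map_sum, map_sum]
    refine Finset.sum_congr rfl fun x _ => ?_
    rw [map_prod, map_prod]
    exact Finset.prod_congr rfl fun i _ => hΦX _ _
  have key : Φ.toMulEquiv (∑ j : Fin d, ∏ i ∈ e, (X (i, j) : MvPolynomial (Fin n × Fin d) K))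
      = Polynomial.C G * Polynomial.X + Polynomial.C H := by
    show Φ _ = _
    rw [hf, map_add, map_mul, hΦv, hG, hH, mul_comm]
  rw [key]
  have hG0 : G ≠ 0 := by
    refine Finset.prod_ne_zero_iff.mpr fun x _ => ?_
    exact X_ne_zero _
  refine linear_irred hG0 ?_
  intro c hcG hcH
  by_contra hc
  have hc0 : c ≠ 0 := by
    rintro rfl
    exact hG0 (zero_dvd_iff.mp hcG)
  obtain ⟨p, hpirr, hpc⟩ := WfDvdMonoid.exists_irreducible_factor hc hc0
  have hp : Prime p := (UniqueFactorizationMonoid.irreducible_iff_prime).mp hpirr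
  obtain ⟨x, hx, hpx⟩ := hp.exists_mem_finset_dvd (hpc.trans hcG)
  have hassoc : Associated p _ := hpirr.associated_of_dvd (mv_prime_X _).irreducible hpx
  have hXH : X (⟨(x.1, j₀), fun h => Finset.ne_of_mem_erase x.2 (congrArg Prod.fst h)⟩ : σ') ∣ H :=
    hassoc.symm.dvd.trans (hpc.trans hcH)
  let ev : σ' → K := fun w => if w.1.2 = j₁ then 1 else 0
  have h1 : eval ev H = 1 := by
    simp only [H, map_sum, map_prod, eval_X]
    have h2 : ∀ x ∈ (Finset.univ.erase j₀).attach,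
        (∏ i ∈ e, ev ⟨(i, x.1), fun h => Finset.ne_of_mem_erase x.2 (congrArg Prod.snd h)⟩)
        = if x.1 = j₁ then 1 else 0 := by
      intro x _
      simp only [ev]
      split_ifs with h
      · simp [h]
      · exact Finset.prod_eq_zero hi₀ rfl
    rw [Finset.sum_congr rfl h2, Finset.sum_attach (Finset.univ.erase j₀)
      (fun x => if x = j₁ then (1:K) else 0), Finset.sum_ite_eq' _ j₁ (fun _ => (1:K)),
      if_pos (Finset.mem_erase.mpr ⟨hj01, Finset.mem_univ _⟩)]
  obtain ⟨t, ht⟩ := hXH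
  have h0 := congrArg (eval ev) ht
  rw [map_mul, eval_X, h1] at h0
  simp only [ev] at h0
  rw [if_neg (by simp [hj₀def, hj₁def, Fin.ext_iff]), zero_mul] at h0
  exact one_ne_zero h0
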